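/- arXiv:1708.04142 — 3 statements merged into one kernel-verified Lean document; each statement's English description precedes it below -/
import Mathlib

section
/- Uniqueness of the single-index direction: Let p ≥ 1, let U ⊆ ℝ^p be a nonempty open connected set, and let α, α̃ ∈ ℝ^p satisfy ‖α‖ = ‖α̃‖ = 1 with the first nonzero entry of α and of α̃ positive. Let g, g̃ : ℝ → ℝ be differentiable functions such that g is non-constant on the interval {αᵀx : x ∈ U}. If g(αᵀx) = g̃(α̃ᵀx) for all x ∈ U, then α = α̃ and g(z) = g̃(z) for all z in {αᵀx : x ∈ U}. -/
open scoped RealInnerProductSpace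

/-- The first nonzero entry of `α` is positive. -/
def FirstNonzeroPos {p : ℕ} (α : EuclideanSpace ℝ (Fin p)) : Prop :=
  ∃ i : Fin p, (∀ j : Fin p, j < i → α j = 0) ∧ 0 < α i

/-- `f` is non-constant on the set `T`. -/
def NonconstOn (f : ℝ → ℝ) (T : Set ℝ) : Prop :=
  ∃ z₁ ∈ T, ∃ z₂ ∈ T, f z₁ ≠ f z₂

/-- MVT-based: on an order-connected set, a differentiable nonconstant function
has a point of nonzero derivative. -/
lemma exists_deriv_ne_aux (T : Set ℝ) (hT : T.OrdConnected) (g : ℝ → ℝ)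
    (hg : Differentiable ℝ g) {z₁ z₂ : ℝ} (hz₁ : z₁ ∈ T) (hz₂ : z₂ ∈ T)
    (hlt : z₁ < z₂) (hne : g z₁ ≠ g z₂) : ∃ z ∈ T, deriv g z ≠ 0 := by
  obtain ⟨c, hc, hceq⟩ := exists_hasDerivAt_eq_slope g (deriv g) hlt
    (hg.continuous.continuousOn) (fun x _ => (hg x).hasDerivAt)
  refine ⟨c, hT.out hz₁ hz₂ ⟨le_of_lt hc.1, le_of_lt hc.2⟩, ?_⟩
  rw [hceq]
  exact div_ne_zero (sub_ne_zero.mpr (Ne.symm hne)) (sub_ne_zero.mpr hlt.ne')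

lemma exists_deriv_ne (T : Set ℝ) (hT : T.OrdConnected) (g : ℝ → ℝ)
    (hg : Differentiable ℝ g) (hnc : NonconstOn g T) : ∃ z ∈ T, deriv g z ≠ 0 := by
  obtain ⟨z₁, hz₁, z₂, hz₂, hne⟩ := hnc
  rcases lt_trichotomy z₁ z₂ with h | h | h
  · exact exists_deriv_ne_aux T hT g hg hz₁ hz₂ h hne
  · exact absurd (congrArg g h) hne
  · exact exists_deriv_ne_aux T hT g hg hz₂ hz₁ h hne.symm

/-- Uniqueness of the single-index direction: if two single-index representations
agree on a nonempty open connected set and the link function is non-constant there,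
then the (normalized, sign-fixed) directions coincide and the link functions agree
on the common index range. -/
theorem single_index_direction_unique
    {p : ℕ} (hp : 1 ≤ p)
    (U : Set (EuclideanSpace ℝ (Fin p))) (hUopen : IsOpen U) (hUconn : IsConnected U)
    (α α' : EuclideanSpace ℝ (Fin p))
    (hα : ‖α‖ = 1) (hα' : ‖α'‖ = 1)
    (hαpos : FirstNonzeroPos α) (hα'pos : FirstNonzeroPos α')
    (g g' : ℝ → ℝ)
    (hg : Differentiable ℝ g) (hg' : Differentiable ℝ g')
    (hnc : NonconstOn g ((fun x => ⟪α, x⟫) '' U))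
    (heq : ∀ x ∈ U, g ⟪α, x⟫ = g' ⟪α', x⟫) :
    α = α' ∧ ∀ z ∈ (fun x => ⟪α, x⟫) '' U, g z = g' z := by
  -- Step 1: directional derivative identity
  have key : ∀ x ∈ U, ∀ v : EuclideanSpace ℝ (Fin p),
      deriv g ⟪α, x⟫ * ⟪α, v⟫ = deriv g' ⟪α', x⟫ * ⟪α', v⟫ := by
    intro x hx v
    have hcont : Continuous fun t : ℝ => x + t • v := by continuity
    have hmem : ∀ᶠ t : ℝ in nhds 0, x + t • v ∈ U := by
      have h0 : x + (0 : ℝ) • v = x := by simp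
      have := hcont.continuousAt (x := (0 : ℝ)).preimage_mem_nhds
        (hUopen.mem_nhds (by rw [h0]; exact hx))
      exact this
    have heq' : (fun t : ℝ => g (⟪α, x⟫ + t * ⟪α, v⟫)) =ᶠ[nhds 0]
        (fun t : ℝ => g' (⟪α', x⟫ + t * ⟪α', v⟫)) := by
      filter_upwards [hmem] with t ht
      have h1 := heq _ ht
      rw [inner_add_right, inner_add_right, real_inner_smul_right, real_inner_smul_right] at h1
      exact h1
    have hu : HasDerivAt (fun t : ℝ => ⟪α, x⟫ + t * ⟪α, v⟫) ⟪α, v⟫ 0 := by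
      simpa using ((hasDerivAt_id (0 : ℝ)).mul_const ⟪α, v⟫).const_add ⟪α, x⟫
    have hu' : HasDerivAt (fun t : ℝ => ⟪α', x⟫ + t * ⟪α', v⟫) ⟪α', v⟫ 0 := by
      simpa using ((hasDerivAt_id (0 : ℝ)).mul_const ⟪α', v⟫).const_add ⟪α', x⟫
    have hφ : HasDerivAt (fun t : ℝ => g (⟪α, x⟫ + t * ⟪α, v⟫))
        (deriv g ⟪α, x⟫ * ⟪α, v⟫) 0 := by
      have := ((hg (⟪α, x⟫ + (0:ℝ) * ⟪α, v⟫)).hasDerivAt).comp 0 hu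
      simpa [Function.comp_def] using this
    have hψ : HasDerivAt (fun t : ℝ => g' (⟪α', x⟫ + t * ⟪α', v⟫))
        (deriv g' ⟪α', x⟫ * ⟪α', v⟫) 0 := by
      have := ((hg' (⟪α', x⟫ + (0:ℝ) * ⟪α', v⟫)).hasDerivAt).comp 0 hu'
      simpa [Function.comp_def] using this
    exact (hφ.congr_of_eventuallyEq heq'.symm).unique hψ
  -- Step 2: the image set is order-connected; find a point of nonzero derivative
  have hTconn : IsConnected ((fun x => ⟪α, x⟫) '' U) :=
    hUconn.image _ (Continuous.inner continuous_const continuous_id).continuousOn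
  have hTord : ((fun x => ⟪α, x⟫) '' U).OrdConnected :=
    hTconn.isPreconnected.ordConnected
  obtain ⟨z₀, hz₀T, hdz₀⟩ := exists_deriv_ne _ hTord g hg hnc
  obtain ⟨x₀, hx₀, hz₀⟩ := hz₀T
  have hdg : deriv g ⟪α, x₀⟫ ≠ 0 := by
    rw [show (⟪α, x₀⟫ : ℝ) = z₀ from hz₀]; exact hdz₀
  set dg := deriv g ⟪α, x₀⟫ with hdg_def
  set dg' := deriv g' ⟪α', x₀⟫ with hdg'_def
  -- Step 3: dg • α = dg' • α'
  have hvec : dg • α = dg' • α' := by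
    have hzero : ∀ v : EuclideanSpace ℝ (Fin p), ⟪dg • α - dg' • α', v⟫ = (0 : ℝ) := by
      intro v
      rw [inner_sub_left, real_inner_smul_left, real_inner_smul_left]
      have := key x₀ hx₀ v
      linarith
    have := hzero (dg • α - dg' • α')
    rw [real_inner_self_eq_norm_sq] at this
    have hn : ‖dg • α - dg' • α'‖ = 0 := by nlinarith [norm_nonneg (dg • α - dg' • α')]
    exact sub_eq_zero.mp (norm_eq_zero.mp hn)
  -- Step 4: α = c • α' with c = dg⁻¹ * dg', and |c| = 1
  set c : ℝ := dg⁻¹ * dg' with hc_def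
  have hαc : α = c • α' := by
    calc α = dg⁻¹ • (dg • α) := by rw [smul_smul, inv_mul_cancel₀ hdg, one_smul]
    _ = dg⁻¹ • (dg' • α') := by rw [hvec]
    _ = c • α' := by rw [smul_smul]
  have habs : |c| = 1 := by
    have : ‖α‖ = |c| * ‖α'‖ := by rw [hαc, norm_smul, Real.norm_eq_abs]
    rw [hα, hα'] at this
    linarith
  have hcases : c = 1 ∨ c = -1 := (abs_eq zero_le_one).mp habs
  have hαα' : α = α' := by
    rcases hcases with h1 | h1
    · rw [hαc, h1, one_smul]
    · exfalso
      have hneg : ∀ j : Fin p, α j = -α' j := by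
        intro j
        rw [hαc, h1]
        simp
      obtain ⟨i, hi, hipos⟩ := hαpos
      obtain ⟨i', hi', hi'pos⟩ := hα'pos
      rcases lt_trichotomy i i' with h | h | h
      · have : α i = -α' i := hneg i
        rw [hi' i h] at this
        simp at this
        rw [this] at hipos
        exact lt_irrefl 0 hipos
      · have : α i = -α' i := hneg i
        rw [h] at this hipos
        linarith
      · have : α i' = -α' i' := hneg i'
        rw [hi i' h] at this
        linarith
  refine ⟨hαα', ?_⟩
  rintro z ⟨x, hx, rfl⟩
  rw [heq x hx, hαα']
end

section
/- Identifiability of scalar nonparametric mixtures of regressions (the one-dimensional reduction used in the proof of the MSIM identifiability theorem): Let I ⊆ ℝ be a nonempty open interval and let k, k̃ ≥ 1. Suppose for j = 1, …, k the functions π_j : ℝ → (0,1), m_j : ℝ → ℝ, σ_j² : ℝ → (0,∞) are differentiable with Σ_{j=1}^k π_j(z) = 1 for all z, and for every pair 1 ≤ i ≠ j ≤ k and every z ∈ I, (m_i(z) − m_j(z))² + (m_i′(z) − m_j′(z))² + (σ_i²(z) − σ_j²(z))² + ((σ_i²)′(z) − (σ_j²)′(z))² ≠ 0; suppose the analogous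 assumptions hold for π̃_j, m̃_j, σ̃_j², j = 1, …, k̃. If for every z ∈ I and every y ∈ ℝ, Σ_{j=1}^k π_j(z) φ(y | m_j(z), σ_j²(z)) = Σ_{j=1}^{k̃} π̃_j(z) φ(y | m̃_j(z), σ̃_j²(z)), then k = k̃ and there exists a permutation τ of {1, …, k} such that π_j(z) = π̃_{τ(j)}(z), m_j(z) = m̃_{τ(j)}(z), and σ_j²(z) = σ̃_{τ(j)}²(z) for all z ∈ I. -/
open Filter Topology Set

noncomputable def normalPDF (y μ v : ℝ) : ℝ :=
  (Real.sqrt (2 * Real.pi * v))⁻¹ * Real.exp (-(y - μ) ^ 2 / (2 * v))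

lemma normalPDF_pos (y μ : ℝ) {v : ℝ} (hv : 0 < v) : 0 < normalPDF y μ v := by
  have h2 : 0 < 2 * Real.pi * v := by positivity
  exact mul_pos (inv_pos.2 (Real.sqrt_pos.2 h2)) (Real.exp_pos _)

lemma quad_tendsto_atBot {a b c : ℝ} (ha : a < 0) :
    Tendsto (fun y : ℝ => a * y ^ 2 + b * y + c) atTop atBot := by
  have h1 : Tendsto (fun y : ℝ => a + b * y⁻¹ + c * (y⁻¹)^2) atTop (𝓝 a) := by
    have : Tendsto (fun y : ℝ => a + b * y⁻¹ + c * (y⁻¹)^2) atTop (𝓝 (a + b * 0 + c * 0^2)) := by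
      exact ((tendsto_const_nhds.add (tendsto_inv_atTop_zero.const_mul b)).add
        ((tendsto_inv_atTop_zero.pow 2).const_mul c))
    simpa using this
  have h2 : Tendsto (fun y : ℝ => y ^ 2) atTop atTop := tendsto_pow_atTop two_ne_zero
  have h3 := h2.atTop_mul_neg ha h1
  apply h3.congr'
  filter_upwards [eventually_gt_atTop (0:ℝ)] with y hy
  have hy' : y ≠ 0 := ne_of_gt hy
  field_simp

lemma ratio_tendsto_zero {μ v μ0 v0 : ℝ} (hv : 0 < v) (hv0 : 0 < v0)
    (h : v < v0 ∨ (v = v0 ∧ μ < μ0)) :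
    Tendsto (fun y => normalPDF y μ v / normalPDF y μ0 v0) atTop (𝓝 0) := by
  have hs : Real.sqrt (2 * Real.pi * v) ≠ 0 := by positivity
  have hs0 : Real.sqrt (2 * Real.pi * v0) ≠ 0 := by positivity
  have hrw : ∀ y : ℝ, normalPDF y μ v / normalPDF y μ0 v0 =
      (Real.sqrt (2 * Real.pi * v0) / Real.sqrt (2 * Real.pi * v)) *
        Real.exp (-(y - μ) ^ 2 / (2 * v) - (-(y - μ0) ^ 2 / (2 * v0))) := by
    intro y
    rw [Real.exp_sub, normalPDF, normalPDF]
    have h1 := Real.exp_ne_zero (-(y - μ0) ^ 2 / (2 * v0))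
    field_simp
  have key : Tendsto (fun y : ℝ => -(y - μ) ^ 2 / (2 * v) - (-(y - μ0) ^ 2 / (2 * v0)))
      atTop atBot := by
    rcases h with hlt | ⟨rfl, hμ⟩
    · have ha : (2 * v)⁻¹ * (-1) + (2 * v0)⁻¹ < 0 := by
        rw [← sub_neg]
        have : (2 * v0)⁻¹ < (2 * v)⁻¹ := by
          apply inv_strictAnti₀ (by linarith) (by linarith)
        simp only [mul_neg_one]
        linarith
      have := quad_tendsto_atBot (a := (2 * v)⁻¹ * (-1) + (2 * v0)⁻¹)
        (b := (2 * v)⁻¹ * (2 * μ) + (2 * v0)⁻¹ * (-2 * μ0))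
        (c := (2 * v)⁻¹ * (-μ^2) + (2 * v0)⁻¹ * (μ0^2)) ha
      apply this.congr
      intro y
      field_simp
      ring
    · have hb : (μ - μ0) / v < 0 := div_neg_of_neg_of_pos (by linarith) hv
      have h1 : Tendsto (fun y : ℝ => (μ - μ0) / v * y) atTop atBot :=
        (tendsto_const_mul_atBot_of_neg hb).2 tendsto_id
      have h2 : Tendsto (fun y : ℝ => (μ - μ0) / v * y + (μ0^2 - μ^2) / (2 * v)) atTop atBot :=
        tendsto_atBot_add_const_right _ _ h1
      apply h2.congr
      intro y
      field_simp
      ring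
  have : Tendsto (fun y : ℝ => (Real.sqrt (2 * Real.pi * v0) / Real.sqrt (2 * Real.pi * v)) *
      Real.exp (-(y - μ) ^ 2 / (2 * v) - (-(y - μ0) ^ 2 / (2 * v0)))) atTop (𝓝 (_ * 0)) :=
    (Real.tendsto_exp_atBot.comp key).const_mul _
  simp only [mul_zero] at this
  exact this.congr fun y => (hrw y).symm

lemma gauss_lin_indep {ι : Type*} [DecidableEq ι] (s : Finset ι) (c μ v : ι → ℝ)
    (hv : ∀ i ∈ s, 0 < v i) (hinj : Set.InjOn (fun i => (μ i, v i)) s)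
    (hzero : ∀ y : ℝ, ∑ i ∈ s, c i * normalPDF y (μ i) (v i) = 0) :
    ∀ i ∈ s, c i = 0 := by
  classical
  induction s using Finset.strongInduction with
  | _ s ih =>
    rcases s.eq_empty_or_nonempty with rfl | hne
    · simp
    · obtain ⟨i0, hi0, hmax⟩ := s.exists_max_image (fun i => toLex (v i, μ i)) hne
      have hv0 : 0 < v i0 := hv i0 hi0
      have hc0 : c i0 = 0 := by
        set F := fun y : ℝ => ∑ i ∈ s, c i *
          (normalPDF y (μ i) (v i) / normalPDF y (μ i0) (v i0)) with hF
        have hF0 : ∀ y, F y = 0 := by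
          intro y
          have hp : normalPDF y (μ i0) (v i0) ≠ 0 := (normalPDF_pos y _ hv0).ne'
          simp only [hF, mul_div_assoc'] 
          rw [← Finset.sum_div, hzero y, zero_div]
        have hlim : Tendsto F atTop (𝓝 (c i0)) := by
          have : Tendsto F atTop (𝓝 (∑ i ∈ s, if i = i0 then c i else 0)) := by
            apply tendsto_finset_sum
            intro i hi
            rcases eq_or_ne i i0 with rfl | hne'
            · simp only [if_pos rfl]
              have : (fun y => c i * (normalPDF y (μ i) (v i) / normalPDF y (μ i) (v i)))
                  = fun y => c i := by
                funext y
                rw [div_self (normalPDF_pos y _ (hv i hi)).ne', mul_one]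
              rw [this]
              exact tendsto_const_nhds
            · simp only [if_neg hne']
              have horder : v i < v i0 ∨ (v i = v i0 ∧ μ i < μ i0) := by
                have hle := hmax i hi
                rw [Prod.Lex.le_iff] at hle
                rcases hle with h1 | ⟨h1, h2⟩
                · exact Or.inl h1
                · refine Or.inr ⟨h1, lt_of_le_of_ne h2 ?_⟩
                  intro hμeq
                  exact hne' (hinj hi hi0 (by simp only [Prod.mk.injEq]; exact ⟨hμeq, h1⟩))
              have := (ratio_tendsto_zero (hv i hi) hv0 horder).const_mul (c i)
              simpa using this
          simpa [Finset.sum_ite_eq' s i0 c, hi0] using this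
        have : Tendsto F atTop (𝓝 0) := by
          rw [show F = fun _ => (0:ℝ) from funext hF0]
          exact tendsto_const_nhds
        exact tendsto_nhds_unique hlim this
      intro i hi
      rcases eq_or_ne i i0 with rfl | hne'
      · exact hc0
      · refine ih (s.erase i0) (Finset.erase_ssubset hi0)
          (fun j hj => hv j (Finset.mem_of_mem_erase hj))
          (hinj.mono (Finset.coe_subset.2 (Finset.erase_subset _ _)))
          ?_ i (Finset.mem_erase.2 ⟨hne', hi⟩)
        intro y
        rw [Finset.sum_erase _ (by rw [hc0, zero_mul])]
        exact hzero y

lemma mixture_match {k k' : ℕ} {a μ v : Fin k → ℝ} {b μ' v' : Fin k' → ℝ}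
    (ha : ∀ j, 0 < a j) (hb : ∀ j, 0 < b j) (hv : ∀ j, 0 < v j) (hv' : ∀ j, 0 < v' j)
    (hinj : Function.Injective fun j => (μ j, v j))
    (hinj' : Function.Injective fun j => (μ' j, v' j))
    (heq : ∀ y, ∑ j, a j * normalPDF y (μ j) (v j) = ∑ j, b j * normalPDF y (μ' j) (v' j)) :
    ∃ e : Fin k ≃ Fin k', ∀ j, a j = b (e j) ∧ μ j = μ' (e j) ∧ v j = v' (e j) := by
  classical
  set p : Fin k → ℝ × ℝ := fun j => (μ j, v j) with hp
  set p' : Fin k' → ℝ × ℝ := fun j => (μ' j, v' j) with hp'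
  set Φ : ℝ × ℝ → (ℝ → ℝ) := fun q => fun y => normalPDF y q.1 q.2 with hΦ
  set L : ((ℝ × ℝ) →₀ ℝ) →ₗ[ℝ] (ℝ → ℝ) := Finsupp.linearCombination ℝ Φ with hL
  set A : (ℝ × ℝ) →₀ ℝ := ∑ j, Finsupp.single (p j) (a j) with hA
  set B : (ℝ × ℝ) →₀ ℝ := ∑ j, Finsupp.single (p' j) (b j) with hB
  have hLsingle : ∀ (q : ℝ × ℝ) (r : ℝ), L (Finsupp.single q r) = r • Φ q := fun q r =>
    Finsupp.linearCombination_single ..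
  have hLA : L A = fun y => ∑ j, a j * normalPDF y (μ j) (v j) := by
    rw [hA, map_sum]
    funext y
    rw [Finset.sum_apply]
    simp [hLsingle, hΦ]
    rfl
  have hLB : L B = fun y => ∑ j, b j * normalPDF y (μ' j) (v' j) := by
    rw [hB, map_sum]
    funext y
    rw [Finset.sum_apply]
    simp [hLsingle, hΦ]
    rfl
  have hAB : A = B := by
    have hD : L (A - B) = 0 := by
      rw [map_sub, hLA, hLB]
      funext y
      simp [heq y]
    have hsupp : ∀ q ∈ (A - B).support, 0 < q.2 := by
      intro q hq
      have := Finsupp.support_sub (f := A) (g := B) hq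
      rcases Finset.mem_union.1 this with h | h
      · have := Finsupp.support_finset_sum h
        rcases Finset.mem_biUnion.1 this with ⟨j, _, hj⟩
        have := Finsupp.support_single_subset hj
        rw [Finset.mem_singleton] at this
        rw [this]; exact hv j
      · have := Finsupp.support_finset_sum h
        rcases Finset.mem_biUnion.1 this with ⟨j, _, hj⟩
        have := Finsupp.support_single_subset hj
        rw [Finset.mem_singleton] at this
        rw [this]; exact hv' j
    have hzero : ∀ y : ℝ, ∑ q ∈ (A - B).support, (A - B) q * normalPDF y q.1 q.2 = 0 := by
      intro y
      have : (L (A - B)) y = 0 := by rw [hD]; rfl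
      rw [Finsupp.linearCombination_apply] at this
      rw [← this]
      rw [Finsupp.sum, Finset.sum_apply]
      rfl
    have := gauss_lin_indep (A - B).support (A - B) Prod.fst Prod.snd hsupp
      (fun x _ y _ h => by simpa using h) hzero
    have hD0 : A - B = 0 := by
      ext q
      by_cases hq : q ∈ (A - B).support
      · exact this q hq
      · exact Finsupp.notMem_support_iff.1 hq
    exact sub_eq_zero.1 hD0
  have hAval : ∀ j, A (p j) = a j := by
    intro j
    rw [hA, Finsupp.finset_sum_apply]
    rw [Finset.sum_eq_single_of_mem j (Finset.mem_univ j)]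
    · simp
    · intro i _ hij
      rw [Finsupp.single_apply, if_neg (fun h => hij (hinj h))]
  have hBval : ∀ j', B (p' j') = b j' := by
    intro j'
    rw [hB, Finsupp.finset_sum_apply]
    rw [Finset.sum_eq_single_of_mem j' (Finset.mem_univ j')]
    · simp
    · intro i _ hij
      rw [Finsupp.single_apply, if_neg (fun h => hij (hinj' h))]
  have hBmem : ∀ q, B q ≠ 0 → ∃ j', p' j' = q := by
    intro q hq
    have hq' : q ∈ B.support := Finsupp.mem_support_iff.2 hq
    rw [hB] at hq'
    have := Finsupp.support_finset_sum hq'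
    rcases Finset.mem_biUnion.1 this with ⟨j, _, hj⟩
    have := Finsupp.support_single_subset hj
    rw [Finset.mem_singleton] at this
    exact ⟨j, this.symm⟩
  have hAmem : ∀ q, A q ≠ 0 → ∃ j, p j = q := by
    intro q hq
    have hq' : q ∈ A.support := Finsupp.mem_support_iff.2 hq
    rw [hA] at hq'
    have := Finsupp.support_finset_sum hq'
    rcases Finset.mem_biUnion.1 this with ⟨j, _, hj⟩
    have := Finsupp.support_single_subset hj
    rw [Finset.mem_singleton] at this
    exact ⟨j, this.symm⟩
  have hBe : ∀ j : Fin k, ∃ j', p' j' = p j := by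
    intro j
    apply hBmem
    rw [← hAB, hAval j]
    exact (ha j).ne'
  have hAf : ∀ j' : Fin k', ∃ j, p j = p' j' := by
    intro j'
    apply hAmem
    rw [hAB, hBval j']
    exact (hb j').ne'
  set e0 : Fin k → Fin k' := fun j => (hBe j).choose with he0def
  have he0 : ∀ j, p' (e0 j) = p j := fun j => (hBe j).choose_spec
  set f0 : Fin k' → Fin k := fun j' => (hAf j').choose with hf0def
  have hf0 : ∀ j', p (f0 j') = p' j' := fun j' => (hAf j').choose_spec
  have hleft : Function.LeftInverse f0 e0 := by
    intro j
    apply hinj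
    rw [hf0 (e0 j), he0 j]
  have hright : Function.RightInverse f0 e0 := by
    intro j'
    apply hinj'
    rw [he0 (f0 j'), hf0 j']
  refine ⟨⟨e0, f0, hleft, hright⟩, ?_⟩
  intro j
  have hpe := he0 j
  have hμ : μ j = μ' (e0 j) := by
    have := congrArg Prod.fst hpe
    simpa [hp, hp'] using this.symm
  have hvv : v j = v' (e0 j) := by
    have := congrArg Prod.snd hpe
    simpa [hp, hp'] using this.symm
  have hw : a j = b (e0 j) := by rw [← hAval j, hAB, ← hpe, hBval]
  exact ⟨hw, hμ, hvv⟩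

lemma eventually_ne_of_deriv_ne {h : ℝ → ℝ} {z0 d : ℝ} (hd : HasDerivAt h d z0)
    (hne : d ≠ 0) : ∀ᶠ z in 𝓝[≠] z0, h z ≠ h z0 := by
  have hslope := hasDerivAt_iff_tendsto_slope.1 hd
  have h1 : ∀ᶠ z in 𝓝[≠] z0, slope h z0 z ≠ 0 :=
    hslope.eventually (eventually_ne_nhds hne)
  filter_upwards [h1, self_mem_nhdsWithin] with z hz hz0
  intro hcontra
  apply hz
  rw [slope_def_field, hcontra, sub_self, zero_div]

lemma pair_eventually_ne {m1 m2 v1 v2 : ℝ → ℝ} {z0 : ℝ}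
    (hm1 : Differentiable ℝ m1) (hm2 : Differentiable ℝ m2)
    (hv1 : Differentiable ℝ v1) (hv2 : Differentiable ℝ v2)
    (hsep : (m1 z0 - m2 z0) ^ 2 + (deriv m1 z0 - deriv m2 z0) ^ 2 +
      (v1 z0 - v2 z0) ^ 2 + (deriv v1 z0 - deriv v2 z0) ^ 2 ≠ 0) :
    ∀ᶠ z in 𝓝[≠] z0, (m1 z, v1 z) ≠ (m2 z, v2 z) := by
  by_cases hval : m1 z0 = m2 z0 ∧ v1 z0 = v2 z0
  · obtain ⟨hm, hv⟩ := hval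
    have hder : deriv m1 z0 ≠ deriv m2 z0 ∨ deriv v1 z0 ≠ deriv v2 z0 := by
      by_contra hcon
      push_neg at hcon
      apply hsep
      rw [hm, hv, hcon.1, hcon.2]
      ring
    rcases hder with hder | hder
    · have hD : HasDerivAt (fun z => m1 z - m2 z) (deriv m1 z0 - deriv m2 z0) z0 :=
        ((hm1 z0).hasDerivAt).sub ((hm2 z0).hasDerivAt)
      have := eventually_ne_of_deriv_ne hD (sub_ne_zero.2 hder)
      filter_upwards [this] with z hz hcontra
      apply hz
      rw [Prod.mk.injEq] at hcontra
      rw [hcontra.1, hm, sub_self, sub_self]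
    · have hD : HasDerivAt (fun z => v1 z - v2 z) (deriv v1 z0 - deriv v2 z0) z0 :=
        ((hv1 z0).hasDerivAt).sub ((hv2 z0).hasDerivAt)
      have := eventually_ne_of_deriv_ne hD (sub_ne_zero.2 hder)
      filter_upwards [this] with z hz hcontra
      apply hz
      rw [Prod.mk.injEq] at hcontra
      rw [hcontra.2, hv, sub_self, sub_self]
  · have hcont : ContinuousAt (fun z => (m1 z - m2 z, v1 z - v2 z)) z0 :=
      ((hm1.continuous.sub hm2.continuous).continuousAt).prodMk
        ((hv1.continuous.sub hv2.continuous).continuousAt)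
    have hne0 : (m1 z0 - m2 z0, v1 z0 - v2 z0) ≠ ((0 : ℝ), (0 : ℝ)) := by
      intro hc
      rw [Prod.mk.injEq] at hc
      exact hval ⟨sub_eq_zero.1 hc.1, sub_eq_zero.1 hc.2⟩
    have := hcont.eventually_ne hne0
    apply (this.filter_mono nhdsWithin_le_nhds).mono
    intro z hz hcontra
    apply hz
    rw [Prod.mk.injEq] at hcontra ⊢
    rw [hcontra.1, hcontra.2, sub_self, sub_self]
    exact ⟨rfl, rfl⟩

lemma deriv_eq_of_eqOn_right {f g : ℝ → ℝ} {z0 ε : ℝ} (hε : 0 < ε)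
    (hf : Differentiable ℝ f) (hg : Differentiable ℝ g)
    (heq : ∀ z ∈ Set.Ioo z0 (z0 + ε), f z = g z) (h0 : f z0 = g z0) :
    deriv f z0 = deriv g z0 := by
  have hmem : Set.Ioo z0 (z0 + ε) ∈ 𝓝[>] z0 :=
    Ioo_mem_nhdsGT_of_mem ⟨le_refl z0, by linarith⟩
  have hev : g =ᶠ[𝓝[Set.Ioi z0] z0] f :=
    Filter.eventually_of_mem hmem fun z hz => (heq z hz).symm
  have h1 : HasDerivWithinAt f (deriv f z0) (Set.Ioi z0) z0 :=
    ((hf z0).hasDerivAt).hasDerivWithinAt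
  have h2 : HasDerivWithinAt g (deriv f z0) (Set.Ioi z0) z0 :=
    h1.congr_of_eventuallyEq hev h0.symm
  have h3 : HasDerivWithinAt g (deriv g z0) (Set.Ioi z0) z0 :=
    ((hg z0).hasDerivAt).hasDerivWithinAt
  rw [← h2.derivWithin (uniqueDiffWithinAt_Ioi z0), ← h3.derivWithin (uniqueDiffWithinAt_Ioi z0)]

lemma deriv_eq_of_eqOn_left {f g : ℝ → ℝ} {z0 ε : ℝ} (hε : 0 < ε)
    (hf : Differentiable ℝ f) (hg : Differentiable ℝ g)
    (heq : ∀ z ∈ Set.Ioo (z0 - ε) z0, f z = g z) (h0 : f z0 = g z0) :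
    deriv f z0 = deriv g z0 := by
  have hmem : Set.Ioo (z0 - ε) z0 ∈ 𝓝[<] z0 :=
    Ioo_mem_nhdsLT_of_mem ⟨by linarith, le_refl z0⟩
  have hev : g =ᶠ[𝓝[Set.Iio z0] z0] f :=
    Filter.eventually_of_mem hmem fun z hz => (heq z hz).symm
  have h1 : HasDerivWithinAt f (deriv f z0) (Set.Iio z0) z0 :=
    ((hf z0).hasDerivAt).hasDerivWithinAt
  have h2 : HasDerivWithinAt g (deriv f z0) (Set.Iio z0) z0 :=
    h1.congr_of_eventuallyEq hev h0.symm
  have h3 : HasDerivWithinAt g (deriv g z0) (Set.Iio z0) z0 :=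
    ((hg z0).hasDerivAt).hasDerivWithinAt
  rw [← h2.derivWithin (uniqueDiffWithinAt_Iio z0), ← h3.derivWithin (uniqueDiffWithinAt_Iio z0)]

lemma preconnected_subset_of_cover {X ι : Type*} [TopologicalSpace X] [Finite ι] {s : Set X}
    (hpre : IsPreconnected s) (hne : s.Nonempty) (S : ι → Set X)
    (hclosed : ∀ i, IsClosed (S i)) (hcover : ∀ z ∈ s, ∃ i, z ∈ S i)
    (huniq : ∀ z ∈ s, ∀ i j, z ∈ S i → z ∈ S j → i = j) :
    ∃ i, s ⊆ S i := by
  classical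
  obtain ⟨u, hu⟩ := hne
  obtain ⟨i0, hi0⟩ := hcover u hu
  refine ⟨i0, ?_⟩
  haveI : PreconnectedSpace s := Subtype.preconnectedSpace hpre
  set T : Set s := Subtype.val ⁻¹' S i0 with hT
  have hTclosed : IsClosed T := (hclosed i0).preimage continuous_subtype_val
  have hTopen : IsOpen T := by
    rw [← isClosed_compl_iff]
    have hTc : Tᶜ = Subtype.val ⁻¹' (⋃ i ∈ {i : ι | i ≠ i0}, S i) := by
      ext ⟨z, hz⟩
      simp only [Set.mem_compl_iff, Set.mem_preimage, Set.mem_iUnion, hT, Set.mem_setOf_eq]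
      constructor
      · intro hzT
        obtain ⟨i, hi⟩ := hcover z hz
        exact ⟨i, fun h => hzT (h ▸ hi), hi⟩
      · rintro ⟨i, hii0, hi⟩ hzT
        exact hii0 (huniq z hz i i0 hi hzT)
    rw [hTc]
    exact ((Set.toFinite _).isClosed_biUnion fun i _ => hclosed i).preimage
      continuous_subtype_val
  have hTne : T.Nonempty := ⟨⟨u, hu⟩, hi0⟩
  have hTuniv : T = Set.univ := IsClopen.eq_univ ⟨hTclosed, hTopen⟩ hTne
  intro z hz
  have : (⟨z, hz⟩ : s) ∈ T := hTuniv ▸ Set.mem_univ _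
  exact this

/-- Identifiability of scalar nonparametric mixtures of regressions on a nonempty
open interval `I ⊆ ℝ`. -/
theorem scalar_nonparametric_mixture_identifiability
    {k k' : ℕ} (hk : 1 ≤ k) (hk' : 1 ≤ k')
    -- `I` is a nonempty open interval
    (I : Set ℝ) (hIopen : IsOpen I) (hIne : I.Nonempty) (hIinterval : I.OrdConnected)
    -- the component proportion, mean and variance functions
    (w m v : Fin k → ℝ → ℝ) (w' m' v' : Fin k' → ℝ → ℝ)
    (hw : ∀ j z, 0 < w j z ∧ w j z < 1) (hw' : ∀ j z, 0 < w' j z ∧ w' j z < 1)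
    (hwsum : ∀ z, ∑ j, w j z = 1) (hw'sum : ∀ z, ∑ j, w' j z = 1)
    (hv : ∀ j z, 0 < v j z) (hv' : ∀ j z, 0 < v' j z)
    -- differentiability
    (hdiff : ∀ j, Differentiable ℝ (w j) ∧ Differentiable ℝ (m j) ∧ Differentiable ℝ (v j))
    (hdiff' : ∀ j, Differentiable ℝ (w' j) ∧ Differentiable ℝ (m' j) ∧ Differentiable ℝ (v' j))
    -- separation of components on `I`
    (hsep : ∀ i j : Fin k, i ≠ j → ∀ z ∈ I,
      (m i z - m j z) ^ 2 + (deriv (m i) z - deriv (m j) z) ^ 2 +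
        (v i z - v j z) ^ 2 + (deriv (v i) z - deriv (v j) z) ^ 2 ≠ 0)
    (hsep' : ∀ i j : Fin k', i ≠ j → ∀ z ∈ I,
      (m' i z - m' j z) ^ 2 + (deriv (m' i) z - deriv (m' j) z) ^ 2 +
        (v' i z - v' j z) ^ 2 + (deriv (v' i) z - deriv (v' j) z) ^ 2 ≠ 0)
    -- the two mixture densities agree on `I`
    (heq : ∀ z ∈ I, ∀ y : ℝ,
      ∑ j, w j z * normalPDF y (m j z) (v j z) =
        ∑ j, w' j z * normalPDF y (m' j z) (v' j z)) :
    k = k' ∧ ∃ τ : Fin k ≃ Fin k',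
      ∀ j : Fin k, ∀ z ∈ I,
        w j z = w' (τ j) z ∧ m j z = m' (τ j) z ∧ v j z = v' (τ j) z := by
  classical
  have hGoodEv : ∀ z0 ∈ I, ∀ᶠ z in 𝓝[≠] z0, z ∈ I ∧
      (Function.Injective fun j : Fin k => (m j z, v j z)) ∧
      (Function.Injective fun j : Fin k' => (m' j z, v' j z)) := by
    intro z0 hz0
    have hI : ∀ᶠ z in 𝓝[≠] z0, z ∈ I :=
      (hIopen.eventually_mem hz0).filter_mono nhdsWithin_le_nhds
    have h1 : ∀ᶠ z in 𝓝[≠] z0, ∀ i j : Fin k, i ≠ j → (m i z, v i z) ≠ (m j z, v j z) := by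
      rw [eventually_all]
      intro i
      rw [eventually_all]
      intro j
      rcases eq_or_ne i j with rfl | hij
      · exact Filter.Eventually.of_forall fun z h => absurd rfl h
      · exact (pair_eventually_ne (hdiff i).2.1 (hdiff j).2.1 (hdiff i).2.2 (hdiff j).2.2
          (hsep i j hij z0 hz0)).mono fun z hz _ => hz
    have h2 : ∀ᶠ z in 𝓝[≠] z0, ∀ i j : Fin k', i ≠ j → (m' i z, v' i z) ≠ (m' j z, v' j z) := by
      rw [eventually_all]
      intro i
      rw [eventually_all]
      intro j
      rcases eq_or_ne i j with rfl | hij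
      · exact Filter.Eventually.of_forall fun z h => absurd rfl h
      · exact (pair_eventually_ne (hdiff' i).2.1 (hdiff' j).2.1 (hdiff' i).2.2 (hdiff' j).2.2
          (hsep' i j hij z0 hz0)).mono fun z hz _ => hz
    filter_upwards [hI, h1, h2] with z hz ha hb
    refine ⟨hz, fun x y hxy => ?_, fun x y hxy => ?_⟩
    · by_contra hne
      exact ha x y hne hxy
    · by_contra hne
      exact hb x y hne hxy
  obtain ⟨z0, hz0⟩ := hIne
  have hkk : k = k' := by
    obtain ⟨zs, hzsI, hzsG1, hzsG2⟩ := (hGoodEv z0 hz0).exists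
    obtain ⟨e, -⟩ := mixture_match (fun j => (hw j zs).1) (fun j => (hw' j zs).1)
      (fun j => hv j zs) (fun j => hv' j zs) hzsG1 hzsG2 (heq zs hzsI)
    simpa using Fintype.card_congr e
  subst hkk
  refine ⟨rfl, ?_⟩
  set S : (Fin k ≃ Fin k) → Set ℝ := fun τ => ⋂ j,
    ({z | w j z = w' (τ j) z} ∩ {z | m j z = m' (τ j) z} ∩ {z | v j z = v' (τ j) z}) with hS
  have hSmem : ∀ τ z, z ∈ S τ ↔
      ∀ j, w j z = w' (τ j) z ∧ m j z = m' (τ j) z ∧ v j z = v' (τ j) z := by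
    intro τ z
    simp only [hS, Set.mem_iInter, Set.mem_inter_iff, Set.mem_setOf_eq, and_assoc]
  have hSclosed : ∀ τ, IsClosed (S τ) := by
    intro τ
    refine isClosed_iInter fun j => IsClosed.inter (IsClosed.inter ?_ ?_) ?_
    · exact isClosed_eq (hdiff j).1.continuous (hdiff' (τ j)).1.continuous
    · exact isClosed_eq (hdiff j).2.1.continuous (hdiff' (τ j)).2.1.continuous
    · exact isClosed_eq (hdiff j).2.2.continuous (hdiff' (τ j)).2.2.continuous
  have hexist : ∀ z ∈ I,
      (Function.Injective fun j : Fin k => (m j z, v j z)) →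
      (Function.Injective fun j : Fin k => (m' j z, v' j z)) → ∃ τ, z ∈ S τ := by
    intro z hz g1 g2
    obtain ⟨e, he⟩ := mixture_match (fun j => (hw j z).1) (fun j => (hw' j z).1)
      (fun j => hv j z) (fun j => hv' j z) g1 g2 (heq z hz)
    exact ⟨e, (hSmem e z).2 he⟩
  have huniq : ∀ z : ℝ,
      (Function.Injective fun j : Fin k => (m' j z, v' j z)) →
      ∀ τ σ, z ∈ S τ → z ∈ S σ → τ = σ := by
    intro z g2 τ σ hτ hσ
    apply Equiv.ext
    intro j
    apply g2
    have h1 := (hSmem τ z).1 hτ j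
    have h2 := (hSmem σ z).1 hσ j
    show (m' (τ j) z, v' (τ j) z) = (m' (σ j) z, v' (σ j) z)
    rw [← h1.2.1, ← h1.2.2, h2.2.1, h2.2.2]
  have hlocal : ∀ z1 ∈ I, ∃ τ, ∃ ε > 0, Set.Ioo (z1 - ε) (z1 + ε) ⊆ I ∩ S τ := by
    intro z1 hz1
    have hev := hGoodEv z1 hz1
    rw [eventually_nhdsWithin_iff] at hev
    obtain ⟨ε, hε, hball⟩ := Metric.eventually_nhds_iff.1 (hev.and (hIopen.eventually_mem hz1))
    have hdist : ∀ z, z ∈ Set.Ioo (z1 - ε) (z1 + ε) → dist z z1 < ε := by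
      intro z hz
      rw [Real.dist_eq, abs_sub_lt_iff]
      exact ⟨by linarith [hz.2], by linarith [hz.1]⟩
    have hgood : ∀ z, z ∈ Set.Ioo (z1 - ε) (z1 + ε) → z ≠ z1 → z ∈ I ∧
        (Function.Injective fun j : Fin k => (m j z, v j z)) ∧
        (Function.Injective fun j : Fin k => (m' j z, v' j z)) := by
      intro z hz hne
      exact (hball (hdist z hz)).1 (Set.mem_compl_singleton_iff.2 hne)
    have hsubR : Set.Ioo z1 (z1 + ε) ⊆ Set.Ioo (z1 - ε) (z1 + ε) := fun z hz =>
      ⟨by linarith [hz.1], hz.2⟩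
    have hsubL : Set.Ioo (z1 - ε) z1 ⊆ Set.Ioo (z1 - ε) (z1 + ε) := fun z hz =>
      ⟨hz.1, by linarith [hz.2]⟩
    obtain ⟨τR, hτR⟩ := preconnected_subset_of_cover (isPreconnected_Ioo (a := z1) (b := z1 + ε))
      ⟨z1 + ε / 2, by constructor <;> linarith⟩ S hSclosed
      (fun z hz => by
        obtain ⟨hzI, g1, g2⟩ := hgood z (hsubR hz) (ne_of_gt hz.1)
        exact hexist z hzI g1 g2)
      (fun z hz τ σ hτ hσ => huniq z (hgood z (hsubR hz) (ne_of_gt hz.1)).2.2 τ σ hτ hσ)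
    obtain ⟨τL, hτL⟩ := preconnected_subset_of_cover (isPreconnected_Ioo (a := z1 - ε) (b := z1))
      ⟨z1 - ε / 2, by constructor <;> linarith⟩ S hSclosed
      (fun z hz => by
        obtain ⟨hzI, g1, g2⟩ := hgood z (hsubL hz) (ne_of_lt hz.2)
        exact hexist z hzI g1 g2)
      (fun z hz τ σ hτ hσ => huniq z (hgood z (hsubL hz) (ne_of_lt hz.2)).2.2 τ σ hτ hσ)
    have hz1R : z1 ∈ S τR := by
      have hcl : z1 ∈ closure (Set.Ioo z1 (z1 + ε)) := by
        rw [closure_Ioo (by linarith : z1 ≠ z1 + ε)]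
        exact ⟨le_refl _, by linarith⟩
      exact closure_minimal hτR (hSclosed τR) hcl
    have hz1L : z1 ∈ S τL := by
      have hcl : z1 ∈ closure (Set.Ioo (z1 - ε) z1) := by
        rw [closure_Ioo (by linarith : z1 - ε ≠ z1)]
        exact ⟨by linarith, le_refl _⟩
      exact closure_minimal hτL (hSclosed τL) hcl
    have hLR : τL = τR := by
      apply Equiv.ext
      intro j
      by_contra hne
      have hRj := (hSmem τR z1).1 hz1R j
      have hLj := (hSmem τL z1).1 hz1L j
      have hdR_m : deriv (m j) z1 = deriv (m' (τR j)) z1 :=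
        deriv_eq_of_eqOn_right hε (hdiff j).2.1 (hdiff' (τR j)).2.1
          (fun z hz => ((hSmem τR z).1 (hτR hz) j).2.1) hRj.2.1
      have hdR_v : deriv (v j) z1 = deriv (v' (τR j)) z1 :=
        deriv_eq_of_eqOn_right hε (hdiff j).2.2 (hdiff' (τR j)).2.2
          (fun z hz => ((hSmem τR z).1 (hτR hz) j).2.2) hRj.2.2
      have hdL_m : deriv (m j) z1 = deriv (m' (τL j)) z1 :=
        deriv_eq_of_eqOn_left hε (hdiff j).2.1 (hdiff' (τL j)).2.1
          (fun z hz => ((hSmem τL z).1 (hτL hz) j).2.1) hLj.2.1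
      have hdL_v : deriv (v j) z1 = deriv (v' (τL j)) z1 :=
        deriv_eq_of_eqOn_left hε (hdiff j).2.2 (hdiff' (τL j)).2.2
          (fun z hz => ((hSmem τL z).1 (hτL hz) j).2.2) hLj.2.2
      apply hsep' (τL j) (τR j) hne z1 hz1
      rw [← hLj.2.1, ← hLj.2.2, ← hdL_m, ← hdL_v, hRj.2.1, hRj.2.2, hdR_m, hdR_v]
      ring
    refine ⟨τR, ε, hε, ?_⟩
    intro z hz
    refine ⟨(hball (hdist z hz)).2, ?_⟩
    rcases lt_trichotomy z z1 with h | h | h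
    · rw [← hLR]
      exact hτL ⟨hz.1, h⟩
    · rw [h]
      exact hz1R
    · exact hτR ⟨h, hz.2⟩
  obtain ⟨τ0, ε0, hε0, h0⟩ := hlocal z0 hz0
  set U : Set ℝ := {z | z ∈ I ∧ ∃ ε > 0, Set.Ioo (z - ε) (z + ε) ⊆ I ∩ S τ0} with hU
  have hUopen : IsOpen U := by
    rw [Metric.isOpen_iff]
    rintro z ⟨hzI, ε, hε, hsub⟩
    refine ⟨ε / 2, by linarith, ?_⟩
    intro z' hz'
    rw [Metric.mem_ball, Real.dist_eq, abs_sub_lt_iff] at hz'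
    have hz'Ioo : z' ∈ Set.Ioo (z - ε) (z + ε) := ⟨by linarith [hz'.2], by linarith [hz'.1]⟩
    refine ⟨(hsub hz'Ioo).1, ε / 2, by linarith, ?_⟩
    intro t ht
    exact hsub ⟨by linarith [ht.1, hz'.2], by linarith [ht.2, hz'.1]⟩
  have hUmem : ∀ z ∈ U, z ∈ S τ0 := by
    rintro z ⟨hzI, ε, hε, hsub⟩
    exact (hsub ⟨by linarith, by linarith⟩).2
  have hz0U : z0 ∈ U := ⟨hz0, ε0, hε0, h0⟩
  have hUclosed' : ∀ z1 ∈ I, z1 ∈ closure U → z1 ∈ U := by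
    intro z1 hz1 hcl
    obtain ⟨σ, ε1, hε1, h1⟩ := hlocal z1 hz1
    suffices hστ : σ = τ0 by
      exact ⟨hz1, ε1, hε1, hστ ▸ h1⟩
    obtain ⟨u, huU, hud⟩ := Metric.mem_closure_iff.1 hcl ε1 hε1
    obtain ⟨huI, εu, hεu, husub⟩ := huU
    have hu1 : u ∈ Set.Ioo (z1 - ε1) (z1 + ε1) := by
      rw [Real.dist_eq, abs_sub_lt_iff] at hud
      exact ⟨by linarith [hud.1], by linarith [hud.2]⟩
    set δ := min εu (min (u - (z1 - ε1)) (z1 + ε1 - u)) with hδ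
    have hδpos : 0 < δ :=
      lt_min hεu (lt_min (by linarith [hu1.1]) (by linarith [hu1.2]))
    have hδ1 : δ ≤ εu := min_le_left _ _
    have hδ2 : δ ≤ u - (z1 - ε1) := le_trans (min_le_right _ _) (min_le_left _ _)
    have hδ3 : δ ≤ z1 + ε1 - u := le_trans (min_le_right _ _) (min_le_right _ _)
    have hIoo_mem : Set.Ioo (u - δ) (u + δ) ∈ 𝓝 u := Ioo_mem_nhds (by linarith) (by linarith)
    have hev := (hGoodEv u huI).and
      (Filter.eventually_of_mem (mem_nhdsWithin_of_mem_nhds hIoo_mem) fun z hz => hz)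
    obtain ⟨g, ⟨hgI, hg1, hg2⟩, hgIoo⟩ := hev.exists
    have hgτ0 : g ∈ S τ0 :=
      (husub ⟨by linarith [hgIoo.1], by linarith [hgIoo.2]⟩).2
    have hgσ : g ∈ S σ :=
      (h1 ⟨by linarith [hgIoo.1], by linarith [hgIoo.2]⟩).2
    exact huniq g hg2 σ τ0 hgσ hgτ0
  have hpre : IsPreconnected I := isPreconnected_iff_ordConnected.2 hIinterval
  haveI : PreconnectedSpace I := Subtype.preconnectedSpace hpre
  set T : Set I := Subtype.val ⁻¹' U with hT
  have hTopen : IsOpen T := hUopen.preimage continuous_subtype_val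
  have hTclosed : IsClosed T := by
    have hTeq : T = Subtype.val ⁻¹' closure U := by
      ext ⟨z, hz⟩
      simp only [hT, Set.mem_preimage]
      exact ⟨fun h => subset_closure h, fun h => hUclosed' z hz h⟩
    rw [hTeq]
    exact isClosed_closure.preimage continuous_subtype_val
  have hTuniv : T = Set.univ := IsClopen.eq_univ ⟨hTclosed, hTopen⟩ ⟨⟨z0, hz0⟩, hz0U⟩
  refine ⟨τ0, ?_⟩
  intro j z hz
  have hzU : z ∈ U := by
    have : (⟨z, hz⟩ : I) ∈ T := hTuniv ▸ Set.mem_univ _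
    exact this
  exact (hSmem τ0 z).1 (hUmem z hzU) j
end

section
/- Identifiability of finite mixtures of linear regressions with fixed positive weights on an open set of covariates (the slice lemma used in the proof of the MRSIP identifiability theorem): Let p ≥ 1, let U ⊆ ℝ^p be a nonempty open set, and let k, k̃ ≥ 1. Suppose a_1, …, a_k > 0 with Σ_{j=1}^k a_j = 1 and ã_1, …, ã_{k̃} > 0 with Σ_{j=1}^{k̃} ã_j = 1, and suppose the pairs (β_1, σ_1²), …, (β_k, σ_k²) ∈ ℝ^p × (0,∞) are pairwise distinct and likewise the pairs (β̃_j, σ̃_j²) are pairwise distinct. If for every x ∈ U and every y ∈ ℝ, Σ_{j=1}^k a_j φ(y | xᵀβ_j, σ_j²) = Σ_{j=1}^{k̃} ã_j φ(y | xᵀβ̃_j, σ̃_j²), then k = k̃ and there exists a permutation τ of {1, …, k} such that a_j = ã_{τ(j)}, β_j = β̃_{τ(j)}, and σ_j² = σ̃_{τ(j)}² for all j. -/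
open scoped RealInnerProductSpace

section Helpers
open Filter Real

lemma tendsto_quad (A B C : ℝ) (h : A < 0 ∨ (A = 0 ∧ B < 0)) :
    Tendsto (fun y : ℝ => A * y ^ 2 + B * y + C) atTop atBot := by
  rcases h with hA | ⟨hA, hB⟩
  · have h1 : Tendsto (fun y : ℝ => A * y + B) atTop atBot := by
      apply Filter.tendsto_atBot_add_const_right
      exact tendsto_id.const_mul_atTop_of_neg hA
    have h2 : Tendsto (fun y : ℝ => y * (A * y + B)) atTop atBot :=
      Filter.Tendsto.atTop_mul_atBot₀ tendsto_id h1
    have := Filter.tendsto_atBot_add_const_right _ C h2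
    refine this.congr fun y => by ring
  · subst hA
    have h1 : Tendsto (fun y : ℝ => B * y + C) atTop atBot := by
      apply Filter.tendsto_atBot_add_const_right
      exact tendsto_id.const_mul_atTop_of_neg hB
    refine h1.congr fun y => by ring
lemma gaussian_li (c : ℝ × ℝ → ℝ) (s : Finset (ℝ × ℝ)) (hs : ∀ q ∈ s, 0 < q.2)
    (h : ∀ y : ℝ, ∑ q ∈ s, c q * Real.exp (-(y - q.1) ^ 2 / (2 * q.2)) = 0) :
    ∀ q ∈ s, c q = 0 := by
  induction s using Finset.strongInduction with
  | _ s ih =>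
    rcases s.eq_empty_or_nonempty with rfl | hne
    · simp
    -- pick the lex-max element by (variance, mean)
    obtain ⟨q0, hq0s, hq0max⟩ := s.exists_max_image (fun q => toLex (q.2, q.1)) hne
    have hv0 : 0 < q0.2 := hs q0 hq0s
    -- exponent function
    set E : ℝ × ℝ → ℝ → ℝ := fun q y =>
      (y - q0.1) ^ 2 / (2 * q0.2) + -(y - q.1) ^ 2 / (2 * q.2) with hE
    -- the rescaled sum is identically zero
    have hF : ∀ y : ℝ, ∑ q ∈ s, c q * Real.exp (E q y) = 0 := by
      intro y
      have := h y
      have : Real.exp ((y - q0.1) ^ 2 / (2 * q0.2)) *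
          ∑ q ∈ s, c q * Real.exp (-(y - q.1) ^ 2 / (2 * q.2)) = 0 := by
        rw [this, mul_zero]
      rw [Finset.mul_sum] at this
      rw [← this]
      refine Finset.sum_congr rfl fun q hq => ?_
      rw [hE]; rw [Real.exp_add]; ring
    -- each non-max term tends to 0
    have hterm : ∀ q ∈ s.erase q0,
        Tendsto (fun y => c q * Real.exp (E q y)) atTop (nhds 0) := by
      intro q hq
      have hqs := Finset.mem_of_mem_erase hq
      have hqne := Finset.ne_of_mem_erase hq
      have hvq : 0 < q.2 := hs q hqs
      have hle := hq0max q hqs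
      rw [Prod.Lex.le_iff] at hle
      have hEeq : ∀ y : ℝ, E q y =
          (1 / (2 * q0.2) - 1 / (2 * q.2)) * y ^ 2 +
          (q.1 / q.2 - q0.1 / q0.2) * y +
          (q0.1 ^ 2 / (2 * q0.2) - q.1 ^ 2 / (2 * q.2)) := by
        intro y
        rw [hE]
        field_simp
        ring
      have hEbot : Tendsto (fun y => E q y) atTop atBot := by
        have : Tendsto (fun y : ℝ => (1 / (2 * q0.2) - 1 / (2 * q.2)) * y ^ 2 +
            (q.1 / q.2 - q0.1 / q0.2) * y +
            (q0.1 ^ 2 / (2 * q0.2) - q.1 ^ 2 / (2 * q.2))) atTop atBot := by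
          apply tendsto_quad
          rcases hle with hlt | ⟨heq2, hle1⟩
          · left
            have : q.2 < q0.2 := hlt
            have h1 : 1 / (2 * q0.2) < 1 / (2 * q.2) := by
              apply one_div_lt_one_div_of_lt <;> nlinarith
            linarith
          · right
            simp only [ofLex_toLex] at heq2
            have hne1 : q.1 ≠ q0.1 := by
              intro h1
              exact hqne (Prod.ext h1 heq2)
            have hlt1 : q.1 < q0.1 := lt_of_le_of_ne hle1 hne1
            constructor
            · rw [heq2]; ring
            · rw [heq2]
              have : q.1 / q0.2 < q0.1 / q0.2 := by
                exact div_lt_div_of_pos_right hlt1 hv0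
              linarith
        exact this.congr fun y => (hEeq y).symm
      have : Tendsto (fun y => Real.exp (E q y)) atTop (nhds 0) :=
        Real.tendsto_exp_atBot.comp hEbot
      simpa using this.const_mul (c q)
    -- the max term is constant c q0
    have hEq0 : ∀ y : ℝ, E q0 y = 0 := by
      intro y; rw [hE]; field_simp; ring
    have hsplit : ∀ y : ℝ, ∑ q ∈ s, c q * Real.exp (E q y) =
        c q0 + ∑ q ∈ s.erase q0, c q * Real.exp (E q y) := by
      intro y
      rw [← Finset.add_sum_erase _ _ hq0s, hEq0, Real.exp_zero, mul_one]
    have hlim : Tendsto (fun y => ∑ q ∈ s, c q * Real.exp (E q y)) atTop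
        (nhds (c q0 + 0)) := by
      have h2 : Tendsto (fun y => ∑ q ∈ s.erase q0, c q * Real.exp (E q y)) atTop
          (nhds 0) := by
        have := tendsto_finset_sum (s.erase q0) hterm
        simpa using this
      have := (tendsto_const_nhds (x := c q0)).add h2
      exact this.congr fun y => (hsplit y).symm
    have hc0 : c q0 = 0 := by
      have h0 : Tendsto (fun y => ∑ q ∈ s, c q * Real.exp (E q y)) atTop (nhds 0) := by
        refine (tendsto_const_nhds (x := (0:ℝ))).congr fun y => (hF y).symm
      have := tendsto_nhds_unique hlim h0
      linarith
    -- apply induction to the erased set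
    have hrest : ∀ q ∈ s.erase q0, c q = 0 := by
      apply ih (s.erase q0) (Finset.erase_ssubset hq0s)
      · exact fun q hq => hs q (Finset.mem_of_mem_erase hq)
      · intro y
        have := h y
        rw [← Finset.add_sum_erase _ _ hq0s, hc0, zero_mul, zero_add] at this
        exact this
    intro q hq
    rcases eq_or_ne q q0 with rfl | hqq
    · exact hc0
    · exact hrest q (Finset.mem_erase.mpr ⟨hqq, hq⟩)
variable {p : ℕ}

lemma dense_generic (W : Finset (EuclideanSpace ℝ (Fin p))) (hW : (0 : EuclideanSpace ℝ (Fin p)) ∉ W) :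
    Dense {x : EuclideanSpace ℝ (Fin p) | ∀ w ∈ W, ⟪x, w⟫ ≠ 0} := by
  classical
  induction W using Finset.induction with
  | empty => simpa using dense_univ
  | @insert w W hwW ih =>
    have hw0 : w ≠ 0 := by intro h; exact hW (h ▸ Finset.mem_insert_self w W)
    have hW0 : (0 : EuclideanSpace ℝ (Fin p)) ∉ W := fun h => hW (Finset.mem_insert_of_mem h)
    have hd1 : Dense {x : EuclideanSpace ℝ (Fin p) | ⟪x, w⟫ ≠ 0} := by
      -- complement is the kernel of a nonzero continuous linear map
      have hker : {x : EuclideanSpace ℝ (Fin p) | ⟪x, w⟫ = 0} =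
          (LinearMap.ker ((innerSL ℝ w : EuclideanSpace ℝ (Fin p) →L[ℝ] ℝ) : EuclideanSpace ℝ (Fin p) →ₗ[ℝ] ℝ) : Set (EuclideanSpace ℝ (Fin p))) := by
        ext x
        simp only [SetLike.mem_coe, LinearMap.mem_ker, ContinuousLinearMap.coe_coe, Set.mem_setOf_eq, innerSL_apply_apply]
        rw [real_inner_comm]
      have hne : LinearMap.ker ((innerSL ℝ w : EuclideanSpace ℝ (Fin p) →L[ℝ] ℝ) : EuclideanSpace ℝ (Fin p) →ₗ[ℝ] ℝ) ≠ ⊤ := by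
        intro h
        have : ⟪w, w⟫ = 0 := by
          have : w ∈ LinearMap.ker ((innerSL ℝ w : EuclideanSpace ℝ (Fin p) →L[ℝ] ℝ) : EuclideanSpace ℝ (Fin p) →ₗ[ℝ] ℝ) := h ▸ Submodule.mem_top
          simpa using this
        exact hw0 (inner_self_eq_zero.mp this)
      have hint : interior ({x : EuclideanSpace ℝ (Fin p) | ⟪x, w⟫ = 0}) = ∅ := by
        rw [hker]
        by_contra h
        exact hne ((LinearMap.ker ((innerSL ℝ w : EuclideanSpace ℝ (Fin p) →L[ℝ] ℝ) : EuclideanSpace ℝ (Fin p) →ₗ[ℝ] ℝ)).eq_top_of_nonempty_interior'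
          (Set.nonempty_iff_ne_empty.mpr h))
      have : Dense ({x : EuclideanSpace ℝ (Fin p) | ⟪x, w⟫ = 0}ᶜ) :=
        interior_eq_empty_iff_dense_compl.mp hint
      exact this
    have ho1 : IsOpen {x : EuclideanSpace ℝ (Fin p) | ⟪x, w⟫ ≠ 0} := by
      have : Continuous fun x : EuclideanSpace ℝ (Fin p) => ⟪x, w⟫ :=
        (continuous_id.inner continuous_const)
      exact isOpen_ne.preimage this
    have ihd := ih hW0
    have : Dense ({x : EuclideanSpace ℝ (Fin p) | ⟪x, w⟫ ≠ 0} ∩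
        {x | ∀ u ∈ W, ⟪x, u⟫ ≠ 0}) := hd1.inter_of_isOpen_left ihd ho1
    convert this using 1
    ext x
    simp only [Set.mem_inter_iff, Set.mem_setOf_eq, Finset.mem_insert]
    constructor
    · intro h; exact ⟨h w (Or.inl rfl), fun u hu => h u (Or.inr hu)⟩
    · rintro ⟨h1, h2⟩ u (rfl | hu)
      · exact h1
      · exact h2 u hu

end Helpers

open Filter Real in
/-- Identifiability of finite mixtures of linear regressions with fixed positive
weights on a nonempty open set of covariates. -/
theorem mixture_linear_regression_identifiability
    {p k k' : ℕ} (hp : 1 ≤ p) (hk : 1 ≤ k) (hk' : 1 ≤ k')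
    (U : Set (EuclideanSpace ℝ (Fin p))) (hUopen : IsOpen U) (hUne : U.Nonempty)
    -- mixing weights
    (a : Fin k → ℝ) (a' : Fin k' → ℝ)
    (ha : ∀ j, 0 < a j) (ha' : ∀ j, 0 < a' j)
    (hasum : ∑ j, a j = 1) (ha'sum : ∑ j, a' j = 1)
    -- component regression coefficients and variances
    (β : Fin k → EuclideanSpace ℝ (Fin p)) (β' : Fin k' → EuclideanSpace ℝ (Fin p))
    (v : Fin k → ℝ) (v' : Fin k' → ℝ)
    (hv : ∀ j, 0 < v j) (hv' : ∀ j, 0 < v' j)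
    -- the pairs `(β_j, σ_j²)` are pairwise distinct
    (hsep : ∀ i j : Fin k, i ≠ j → (β i, v i) ≠ (β j, v j))
    (hsep' : ∀ i j : Fin k', i ≠ j → (β' i, v' i) ≠ (β' j, v' j))
    -- the two mixture densities agree on `U`
    (heq : ∀ x ∈ U, ∀ y : ℝ,
      ∑ j, a j * normalPDF y ⟪x, β j⟫ (v j) =
        ∑ j, a' j * normalPDF y ⟪x, β' j⟫ (v' j)) :
    k = k' ∧ ∃ τ : Fin k ≃ Fin k',
      ∀ j : Fin k, a j = a' (τ j) ∧ β j = β' (τ j) ∧ v j = v' (τ j) := by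
  classical
  -- the finite set of all regression vectors
  set B : Finset (EuclideanSpace ℝ (Fin p)) :=
    Finset.image β Finset.univ ∪ Finset.image β' Finset.univ with hB
  -- the finite set of nonzero differences
  set W : Finset (EuclideanSpace ℝ (Fin p)) :=
    ((B ×ˢ B).filter (fun q => q.1 ≠ q.2)).image (fun q => q.1 - q.2) with hWdef
  have hW0 : (0 : EuclideanSpace ℝ (Fin p)) ∉ W := by
    intro h
    rw [hWdef, Finset.mem_image] at h
    obtain ⟨q, hq, hq0⟩ := h
    rw [Finset.mem_filter] at hq
    exact hq.2 (sub_eq_zero.mp hq0)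
  -- pick a generic point x ∈ U
  obtain ⟨x, hxU, hxW⟩ : ∃ x ∈ U, ∀ w ∈ W, ⟪x, w⟫ ≠ 0 := by
    obtain ⟨x, hx1, hx2⟩ := (dense_generic W hW0).inter_open_nonempty U hUopen hUne
    exact ⟨x, hx1, hx2⟩
  -- genericity: the map b ↦ ⟪x, b⟫ is injective on B
  have hinj : ∀ b1 ∈ B, ∀ b2 ∈ B, ⟪x, b1⟫ = ⟪x, b2⟫ → b1 = b2 := by
    intro b1 h1 b2 h2 hip
    by_contra hne
    refine hxW (b1 - b2) ?_ ?_
    · rw [hWdef, Finset.mem_image]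
      exact ⟨(b1, b2), Finset.mem_filter.mpr ⟨Finset.mem_product.mpr ⟨h1, h2⟩, hne⟩, rfl⟩
    · rw [inner_sub_right]; rw [hip]; ring
  have hβB : ∀ j, β j ∈ B := fun j =>
    Finset.mem_union_left _ (Finset.mem_image_of_mem β (Finset.mem_univ j))
  have hβ'B : ∀ j, β' j ∈ B := fun j =>
    Finset.mem_union_right _ (Finset.mem_image_of_mem β' (Finset.mem_univ j))
  -- the one-dimensional parameters at x
  set m : Fin k → ℝ := fun j => ⟪x, β j⟫ with hm
  set m' : Fin k' → ℝ := fun j => ⟪x, β' j⟫ with hm'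
  set P : Fin k → ℝ × ℝ := fun j => (m j, v j) with hP
  set P' : Fin k' → ℝ × ℝ := fun j => (m' j, v' j) with hP'
  have hPinj : Function.Injective P := by
    intro i j hij
    by_contra hne
    have h1 : m i = m j := congrArg Prod.fst hij
    have h2 : v i = v j := congrArg Prod.snd hij
    have : β i = β j := hinj _ (hβB i) _ (hβB j) h1
    exact hsep i j hne (Prod.ext this h2)
  have hPinj' : Function.Injective P' := by
    intro i j hij
    by_contra hne
    have h1 : m' i = m' j := congrArg Prod.fst hij
    have h2 : v' i = v' j := congrArg Prod.snd hij
    have : β' i = β' j := hinj _ (hβ'B i) _ (hβ'B j) h1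
    exact hsep' i j hne (Prod.ext this h2)
  -- the combined finite set of 1D parameters
  set s : Finset (ℝ × ℝ) :=
    Finset.image P Finset.univ ∪ Finset.image P' Finset.univ with hsdef
  have hs : ∀ q ∈ s, 0 < q.2 := by
    intro q hq
    rw [hsdef, Finset.mem_union, Finset.mem_image, Finset.mem_image] at hq
    rcases hq with ⟨j, _, rfl⟩ | ⟨j, _, rfl⟩
    · exact hv j
    · exact hv' j
  -- the signed coefficient of each Gaussian component
  set c : ℝ × ℝ → ℝ := fun q => (Real.sqrt (2 * Real.pi * q.2))⁻¹ *
    ((∑ j ∈ Finset.univ.filter (fun j => P j = q), a j) -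
     (∑ j ∈ Finset.univ.filter (fun j => P' j = q), a' j)) with hc
  -- fiberwise sums reproduce the mixtures
  have key1 : ∀ y : ℝ, ∑ q ∈ s,
      (∑ j ∈ Finset.univ.filter (fun j => P j = q), a j) * normalPDF y q.1 q.2 =
      ∑ j, a j * normalPDF y (m j) (v j) := by
    intro y
    rw [← Finset.sum_fiberwise_of_maps_to (g := P) (t := s)
      (fun j _ => Finset.mem_union_left _ (Finset.mem_image_of_mem P (Finset.mem_univ j)))
      (fun j => a j * normalPDF y (m j) (v j))]
    refine Finset.sum_congr rfl fun q hq => ?_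
    rw [Finset.sum_mul]
    refine Finset.sum_congr rfl fun j hj => ?_
    have : P j = q := (Finset.mem_filter.mp hj).2
    rw [← this]
  have key2 : ∀ y : ℝ, ∑ q ∈ s,
      (∑ j ∈ Finset.univ.filter (fun j => P' j = q), a' j) * normalPDF y q.1 q.2 =
      ∑ j, a' j * normalPDF y (m' j) (v' j) := by
    intro y
    rw [← Finset.sum_fiberwise_of_maps_to (g := P') (t := s)
      (fun j _ => Finset.mem_union_right _ (Finset.mem_image_of_mem P' (Finset.mem_univ j)))
      (fun j => a' j * normalPDF y (m' j) (v' j))]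
    refine Finset.sum_congr rfl fun q hq => ?_
    rw [Finset.sum_mul]
    refine Finset.sum_congr rfl fun j hj => ?_
    have : P' j = q := (Finset.mem_filter.mp hj).2
    rw [← this]
  -- the combined signed mixture vanishes
  have hzero : ∀ y : ℝ, ∑ q ∈ s, c q * Real.exp (-(y - q.1) ^ 2 / (2 * q.2)) = 0 := by
    intro y
    have hterm : ∀ q ∈ s, c q * Real.exp (-(y - q.1) ^ 2 / (2 * q.2)) =
        (∑ j ∈ Finset.univ.filter (fun j => P j = q), a j) * normalPDF y q.1 q.2 -
        (∑ j ∈ Finset.univ.filter (fun j => P' j = q), a' j) * normalPDF y q.1 q.2 := by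
      intro q hq
      rw [hc]
      simp only [normalPDF]
      ring
    rw [Finset.sum_congr rfl hterm, Finset.sum_sub_distrib, key1 y, key2 y]
    have := heq x hxU y
    rw [hm, hm'] at *
    simp only [sub_eq_zero]
    exact this
  -- linear independence kills all coefficients
  have hc0 : ∀ q ∈ s, c q = 0 := gaussian_li c s hs hzero
  have hbal : ∀ q ∈ s,
      (∑ j ∈ Finset.univ.filter (fun j => P j = q), a j) =
      (∑ j ∈ Finset.univ.filter (fun j => P' j = q), a' j) := by
    intro q hq
    have h1 := hc0 q hq
    rw [hc] at h1
    have h2 : (Real.sqrt (2 * Real.pi * q.2))⁻¹ ≠ 0 := by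
      refine inv_ne_zero (ne_of_gt (Real.sqrt_pos.mpr ?_))
      have := hs q hq
      positivity
    have := mul_eq_zero.mp h1
    rcases this with h | h
    · exact absurd h h2
    · linarith [sub_eq_zero.mp h]
  -- singleton fibers
  have hfib : ∀ j : Fin k, Finset.univ.filter (fun i => P i = P j) = {j} := by
    intro j
    ext i
    simp only [Finset.mem_filter, Finset.mem_univ, true_and, Finset.mem_singleton]
    exact ⟨fun h => hPinj h, fun h => h ▸ rfl⟩
  have hfib' : ∀ j : Fin k', Finset.univ.filter (fun i => P' i = P' j) = {j} := by
    intro j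
    ext i
    simp only [Finset.mem_filter, Finset.mem_univ, true_and, Finset.mem_singleton]
    exact ⟨fun h => hPinj' h, fun h => h ▸ rfl⟩
  -- matching in both directions
  have hex : ∀ j : Fin k, ∃ j' : Fin k', P' j' = P j ∧ a' j' = a j := by
    intro j
    have hqs : P j ∈ s :=
      Finset.mem_union_left _ (Finset.mem_image_of_mem P (Finset.mem_univ j))
    have h1 := hbal (P j) hqs
    rw [hfib j, Finset.sum_singleton] at h1
    have h2 : (Finset.univ.filter (fun i => P' i = P j)).Nonempty := by
      by_contra hne
      rw [Finset.not_nonempty_iff_eq_empty] at hne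
      rw [hne, Finset.sum_empty] at h1
      exact absurd h1 (ne_of_gt (ha j))
    obtain ⟨j', hj'⟩ := h2
    have hPj' : P' j' = P j := (Finset.mem_filter.mp hj').2
    refine ⟨j', hPj', ?_⟩
    have : Finset.univ.filter (fun i => P' i = P j) = {j'} := by
      rw [← hPj']
      exact hfib' j'
    rw [this, Finset.sum_singleton] at h1
    exact h1.symm
  have hex' : ∀ j' : Fin k', ∃ j : Fin k, P j = P' j' := by
    intro j'
    have hqs : P' j' ∈ s :=
      Finset.mem_union_right _ (Finset.mem_image_of_mem P' (Finset.mem_univ j'))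
    have h1 := hbal (P' j') hqs
    rw [hfib' j', Finset.sum_singleton] at h1
    have h2 : (Finset.univ.filter (fun i => P i = P' j')).Nonempty := by
      by_contra hne
      rw [Finset.not_nonempty_iff_eq_empty] at hne
      rw [hne, Finset.sum_empty] at h1
      exact absurd h1.symm (ne_of_gt (ha' j'))
    obtain ⟨j, hj⟩ := h2
    exact ⟨j, (Finset.mem_filter.mp hj).2⟩
  choose f hf1 hf2 using hex
  choose g hg using hex'
  have hgf : Function.LeftInverse g f := by
    intro j
    apply hPinj
    rw [hg (f j), hf1 j]
  have hfg : Function.RightInverse g f := by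
    intro j'
    apply hPinj'
    rw [hf1 (g j'), hg j']
  set τ : Fin k ≃ Fin k' := ⟨f, g, hgf, hfg⟩ with hτ
  have hkk' : k = k' := by
    have := Fintype.card_congr τ
    simpa using this
  refine ⟨hkk', τ, fun j => ?_⟩
  have h1 := hf1 j
  have hmm : m' (f j) = m j := congrArg Prod.fst h1
  have hvv : v' (f j) = v j := congrArg Prod.snd h1
  refine ⟨(hf2 j).symm, ?_, hvv.symm⟩
  exact hinj _ (hβB j) _ (hβ'B (f j)) hmm.symm
end
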